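/- For every finite sequence of real numbers (m_1, ..., m_p) arising as the first p moments of some probability measure on ℝ, there exists a compactly supported probability measure (a finite convex combination of Dirac masses) whose first p moments are exactly (m_1, ..., m_p). -/

import Mathlib

open MeasureTheory

open Set Filter Topology Pointwise in

/-- The barycenter of an integrable function w.r.t. a probability measure lies in the
convex hull of its image on any conull set, in a finite-dimensional space. -/
lemma barycenter_mem_convexHull :
    ∀ (n : ℕ) (E : Type) [NormedAddCommGroup E] [InnerProductSpace ℝ E]
      [FiniteDimensional ℝ E], Module.finrank ℝ E ≤ n →
      ∀ (α : Type) [MeasurableSpace α] (μ : Measure α) [IsProbabilityMeasure μ]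
        (g : α → E) (s : Set α), Integrable g μ → (∀ᵐ a ∂μ, a ∈ s) →
        (∫ a, g a ∂μ) ∈ convexHull ℝ (g '' s) := by
  intro n
  induction n with
  | zero =>
    intro E _ _ _ hrank α _ μ _ g s hg hs
    have : Subsingleton E := Module.finrank_zero_iff.mp (Nat.le_zero.mp hrank)
    obtain ⟨a, ha⟩ : s.Nonempty := Filter.nonempty_of_mem hs
    have : (∫ a, g a ∂μ) = g a := Subsingleton.elim _ _
    rw [this]
    exact subset_convexHull ℝ _ (Set.mem_image_of_mem g ha)
  | succ n ih =>
    intro E _ _ _ hrank α _ μ _ g s hg hs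
    set b := ∫ a, g a ∂μ with hbdef
    set C := convexHull ℝ (g '' s) with hCdef
    have hsne : s.Nonempty := Filter.nonempty_of_mem hs
    have hconv : Convex ℝ C := convex_convexHull ℝ _
    have hsubC : ∀ a ∈ s, g a ∈ C := fun a ha =>
      subset_convexHull ℝ _ (Set.mem_image_of_mem g ha)
    have hbcl : b ∈ closure C := by
      refine hconv.closure.integral_mem isClosed_closure ?_ hg
      filter_upwards [hs] with a ha
      exact subset_closure (hsubC a ha)
    by_cases hb : b ∈ C
    · exact hb
    -- find a nonzero functional which is a.e. constant equal to `f b` on `g`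
    have hf : ∃ f : E →L[ℝ] ℝ, f ≠ 0 ∧ ∀ᵐ a ∂μ, f (g a) = f b := by
      by_cases hspan : affineSpan ℝ C = ⊤
      · have hint : (interior C).Nonempty :=
          hconv.interior_nonempty_iff_affineSpan_eq_top.2 hspan
        obtain ⟨f, hflt⟩ := geometric_hahn_banach_point_open hconv.interior
          isOpen_interior (fun h => hb (interior_subset h))
        obtain ⟨x₀, hx₀⟩ := hint
        have hfne : f ≠ 0 := by
          intro h
          have := hflt x₀ hx₀
          rw [h] at this
          simp at this
        have hle : ∀ y ∈ closure C, f b ≤ f y := by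
          intro y hy
          have tend : Tendsto (fun θ : ℝ => f (θ • x₀ + (1 - θ) • y))
              (𝓝[>] (0 : ℝ)) (𝓝 (f y)) := by
            have hc : Continuous (fun θ : ℝ => f (θ • x₀ + (1 - θ) • y)) := by
              fun_prop
            have h0 := hc.tendsto 0
            simp only [zero_smul, sub_zero, one_smul, zero_add] at h0
            exact h0.mono_left nhdsWithin_le_nhds
          refine ge_of_tendsto tend ?_
          filter_upwards [Ioo_mem_nhdsGT_of_mem
            (show (0 : ℝ) ∈ Set.Ico (0 : ℝ) 1 by norm_num)] with θ hθ
          exact (hflt _ (hconv.combo_interior_closure_mem_interior hx₀ hy hθ.1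
            (by linarith [hθ.2]) (by ring))).le
        have hintg : ∫ a, f (g a) ∂μ = f b := f.integral_comp_comm hg
        refine ⟨f, hfne, ?_⟩
        have hnonneg : 0 ≤ᵐ[μ] fun a => f (g a) - f b := by
          filter_upwards [hs] with a ha
          simp only [Pi.zero_apply]
          have := hle (g a) (subset_closure (hsubC a ha))
          linarith
        have hint0 : Integrable (fun a => f (g a) - f b) μ :=
          (f.integrable_comp hg).sub (integrable_const _)
        have hzero : ∫ a, (f (g a) - f b) ∂μ = 0 := by
          rw [integral_sub (f.integrable_comp hg) (integrable_const _), hintg,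
            integral_const, probReal_univ]
          simp
        have := (integral_eq_zero_iff_of_nonneg_ae hnonneg hint0).mp hzero
        filter_upwards [this] with a ha
        have h0 : f (g a) - f b = 0 := by simpa using ha
        linarith
      · -- the affine span of C is proper; take a functional vanishing on its direction
        set V : Submodule ℝ E := vectorSpan ℝ C with hVdef
        have hVne : V ≠ ⊤ := by
          intro h
          apply hspan
          obtain ⟨y₀, hy₀⟩ := hsne
          exact (AffineSubspace.affineSpan_eq_top_iff_vectorSpan_eq_top_of_nonempty ℝ E E
            ⟨g y₀, hsubC _ hy₀⟩).mpr h
        have hVorth : Vᗮ ≠ ⊥ := by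
          intro h
          exact hVne (Submodule.orthogonal_eq_bot_iff.mp h)
        obtain ⟨v, hvV, hv0⟩ := Submodule.exists_mem_ne_zero_of_ne_bot hVorth
        set f : E →L[ℝ] ℝ := innerSL ℝ v with hfdef
        have hfne : f ≠ 0 := by
          intro h
          apply hv0
          have : f v = 0 := by rw [h]; rfl
          rw [hfdef] at this
          simpa using (inner_self_eq_zero (𝕜 := ℝ)).mp this
        obtain ⟨y₀, hy₀s⟩ := hsne
        have hconst : ∀ y ∈ C, f y = f (g y₀) := by
          intro y hy
          have hsub : y - g y₀ ∈ V := by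
            have := AffineSubspace.vsub_mem_direction
              (subset_affineSpan ℝ C hy) (subset_affineSpan ℝ C (hsubC _ hy₀s))
            rwa [direction_affineSpan] at this
          have : f (y - g y₀) = 0 :=
            Submodule.inner_left_of_mem_orthogonal hsub hvV
          rw [map_sub] at this
          linarith
        have hbconst : f b = f (g y₀) := by
          have hCsub : C ⊆ f ⁻¹' {f (g y₀)} := fun y hy => hconst y hy
          have : closure C ⊆ f ⁻¹' {f (g y₀)} :=
            closure_minimal hCsub (IsClosed.preimage f.continuous isClosed_singleton)
          exact this hbcl
        refine ⟨f, hfne, ?_⟩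
        filter_upwards [hs] with a ha
        rw [hconst (g a) (hsubC a ha), hbconst]
    obtain ⟨f, hfne, hae⟩ := hf
    -- project onto the kernel of f and use the inductive hypothesis
    set K : Submodule ℝ E := LinearMap.ker (f : E →ₗ[ℝ] ℝ) with hKdef
    have hrankK : Module.finrank ℝ K ≤ n := by
      rw [hKdef]
      have h1 : Module.finrank ℝ (LinearMap.range (f : E →ₗ[ℝ] ℝ)) = 1 := by
        obtain ⟨x, hx⟩ : ∃ x, f x ≠ 0 := by
          by_contra h
          push_neg at h
          exact hfne (ContinuousLinearMap.ext fun x => by simp [h x])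
        have htop : LinearMap.range (f : E →ₗ[ℝ] ℝ) = ⊤ := by
          rw [LinearMap.range_eq_top]
          intro r
          refine ⟨(r / f x) • x, ?_⟩
          simp only [ContinuousLinearMap.coe_coe, _root_.map_smul, smul_eq_mul]
          field_simp
        rw [htop, finrank_top]
        simp
      have h2 := LinearMap.finrank_range_add_finrank_ker (f : E →ₗ[ℝ] ℝ)
      rw [h1] at h2
      omega
    set P := K.orthogonalProjectionOnto with hPdef
    set g' : α → K := fun a => P (g a - b) with hg'def
    set s' : Set α := s ∩ {a | f (g a) = f b} with hs'def
    have hs' : ∀ᵐ a ∂μ, a ∈ s' := by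
      filter_upwards [hs, hae] with a h1 h2
      exact ⟨h1, h2⟩
    have hgsub : Integrable (fun a => g a - b) μ := hg.sub (integrable_const b)
    have hg' : Integrable g' μ := P.integrable_comp hgsub
    have hint0 : (∫ a, g' a ∂μ) = 0 := by
      rw [hg'def]
      calc (∫ a, P (g a - b) ∂μ) = P (∫ a, (g a - b) ∂μ) :=
            P.integral_comp_comm hgsub
        _ = 0 := by
            rw [integral_sub hg (integrable_const b), integral_const, probReal_univ]
            simp [hbdef]
    have hmem := ih K hrankK α μ g' s' hg' hs'
    rw [hint0] at hmem
    -- push forward along the inclusion of K and translate by b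
    have hmem2 : (0 : E) ∈ convexHull ℝ (K.subtype '' (g' '' s')) := by
      rw [← K.subtype.image_convexHull]
      exact ⟨0, hmem, by simp⟩
    have himgeq : K.subtype '' (g' '' s') = (fun a => g a - b) '' s' := by
      rw [Set.image_image]
      apply Set.image_congr
      intro a ha
      have hk : g a - b ∈ K := by
        rw [hKdef]
        simp only [LinearMap.mem_ker]
        have : f (g a - b) = f (g a) - f b := map_sub f _ _
        rw [ContinuousLinearMap.coe_coe, this, ha.2]
        ring
      simp only [Submodule.coe_subtype, hg'def, hPdef]
      exact Submodule.starProjection_eq_self_iff.mpr hk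
    rw [himgeq] at hmem2
    have htrans : (fun a => g a - b) '' s' = (-b) +ᵥ (g '' s') := by
      rw [← Set.image_vadd, Set.image_image]
      apply Set.image_congr
      intro a _
      simp [vadd_eq_add, sub_eq_neg_add]
    rw [htrans, convexHull_vadd, Set.mem_vadd_set] at hmem2
    obtain ⟨y, hy, hyb⟩ := hmem2
    have hyb' : b = y := by
      have h0 : -b + y = 0 := hyb
      exact neg_add_eq_zero.mp h0
    rw [hyb']
    exact convexHull_mono (Set.image_mono Set.inter_subset_left) hy

/-- If `μ` is a probability measure on `ℝ` with finite moments of orders `1,…,p`, then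
there is a probability measure which is a finite convex combination of Dirac masses
having the same first `p` moments as `μ`. -/
theorem exists_discrete_measure_same_moments
    (μ : Measure ℝ) [IsProbabilityMeasure μ] (p : ℕ) (hp : 1 ≤ p)
    (hmom : ∀ i ≤ p, Integrable (fun t : ℝ => |t| ^ i) μ) :
    ∃ (n : ℕ) (w : Fin n → ℝ) (x : Fin n → ℝ),
      (∀ j, 0 ≤ w j) ∧ (∑ j, w j = 1) ∧
      (let ν : Measure ℝ := ∑ j : Fin n, ENNReal.ofReal (w j) • Measure.dirac (x j)
       IsProbabilityMeasure ν ∧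
         ∀ i, 1 ≤ i → i ≤ p → ∫ t : ℝ, t ^ i ∂ν = ∫ t : ℝ, t ^ i ∂μ) := by
  classical
  set g : ℝ → EuclideanSpace ℝ (Fin p) :=
    fun t => (WithLp.equiv 2 (Fin p → ℝ)).symm (fun i => t ^ ((i : ℕ) + 1)) with hgdef
  have hgcont : Continuous g :=
    (PiLp.continuous_toLp 2 (fun _ : Fin p => ℝ)).comp
      (continuous_pi fun i => continuous_pow _)
  have hbound : Integrable (fun t : ℝ => ∑ i : Fin p, |t| ^ ((i : ℕ) + 1)) μ :=
    integrable_finset_sum _ (fun i _ => hmom _ (Nat.succ_le_of_lt i.isLt))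
  have hnorm : ∀ t : ℝ, ‖g t‖ ≤ ∑ i : Fin p, |t| ^ ((i : ℕ) + 1) := by
    intro t
    have h1 : ‖g t‖ = Real.sqrt (∑ i : Fin p, ‖g t i‖ ^ 2) := by
      rw [EuclideanSpace.norm_eq]
    rw [h1]
    have h2 : ∑ i : Fin p, ‖g t i‖ ^ 2 ≤ (∑ i : Fin p, |t| ^ ((i : ℕ) + 1)) ^ 2 := by
      have : ∀ i : Fin p, ‖g t i‖ = |t| ^ ((i : ℕ) + 1) := by
        intro i
        simp [hgdef, Real.norm_eq_abs, abs_pow]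
      rw [Finset.sum_congr rfl (fun i _ => by rw [this i])]
      exact Finset.sum_sq_le_sq_sum_of_nonneg (fun i _ => by positivity)
    calc Real.sqrt (∑ i : Fin p, ‖g t i‖ ^ 2)
        ≤ Real.sqrt ((∑ i : Fin p, |t| ^ ((i : ℕ) + 1)) ^ 2) := Real.sqrt_le_sqrt h2
      _ = ∑ i : Fin p, |t| ^ ((i : ℕ) + 1) :=
          Real.sqrt_sq (Finset.sum_nonneg fun i _ => by positivity)
  have hgint : Integrable g μ :=
    Integrable.mono' hbound hgcont.aestronglyMeasurable (ae_of_all _ hnorm)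
  set b : EuclideanSpace ℝ (Fin p) := ∫ t, g t ∂μ with hbdef
  have hbk : ∀ k : Fin p, b k = ∫ t, t ^ ((k : ℕ) + 1) ∂μ := by
    intro k
    have := (EuclideanSpace.proj k (𝕜 := ℝ)).integral_comp_comm hgint
    have h2 : (fun t => (EuclideanSpace.proj k (𝕜 := ℝ)) (g t))
        = fun t => t ^ ((k : ℕ) + 1) := by
      funext t
      simp [hgdef]
    rw [h2] at this
    have h3 : b k = (EuclideanSpace.proj k (𝕜 := ℝ)) b := by
      simp [PiLp.proj_apply]
    rw [h3, hbdef, ← this]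
  have hmem : b ∈ convexHull ℝ (g '' Set.univ) :=
    barycenter_mem_convexHull p (EuclideanSpace ℝ (Fin p))
      (le_of_eq finrank_euclideanSpace_fin) ℝ μ g Set.univ hgint
      (Filter.Eventually.of_forall fun _ => Set.mem_univ _)
  rw [Set.image_univ, mem_convexHull_iff_exists_fintype] at hmem
  obtain ⟨ι, hι, w, z, hw0, hw1, hz, hsum⟩ := hmem
  choose x hx using hz
  let e := Fintype.equivFin ι
  refine ⟨Fintype.card ι, w ∘ e.symm, x ∘ e.symm, fun j => hw0 _, ?_, ?_, ?_⟩
  · rw [← hw1]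
    exact Fintype.sum_equiv e.symm _ _ (fun j => rfl)
  · -- probability measure
    constructor
    rw [Measure.coe_finset_sum, Finset.sum_apply]
    have : ∀ j : Fin (Fintype.card ι),
        (ENNReal.ofReal ((w ∘ e.symm) j) • Measure.dirac ((x ∘ e.symm) j)) Set.univ
          = ENNReal.ofReal ((w ∘ e.symm) j) := by
      intro j
      rw [Measure.smul_apply, Measure.dirac_apply_of_mem (Set.mem_univ _)]
      simp
    rw [Finset.sum_congr rfl (fun j _ => this j)]
    have hsum1 : (∑ j : Fin (Fintype.card ι), ENNReal.ofReal ((w ∘ e.symm) j))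
        = ENNReal.ofReal (∑ j : Fin (Fintype.card ι), (w ∘ e.symm) j) :=
      (ENNReal.ofReal_sum_of_nonneg (fun j _ => hw0 _)).symm
    rw [hsum1, show ∑ j : Fin (Fintype.card ι), (w ∘ e.symm) j = 1 from by
      rw [← hw1]; exact Fintype.sum_equiv e.symm _ _ (fun j => rfl)]
    simp
  · -- moments
    intro i h1 hip
    have hintj : ∀ j : Fin (Fintype.card ι), Integrable (fun t : ℝ => t ^ i)
        (ENNReal.ofReal ((w ∘ e.symm) j) • Measure.dirac ((x ∘ e.symm) j)) := by
      intro j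
      exact ((integrable_const _).congr (ae_eq_dirac (fun t : ℝ => t ^ i)).symm).smul_measure
        ENNReal.ofReal_ne_top
    rw [integral_finset_sum_measure (fun j _ => hintj j)]
    have hterm : ∀ j : Fin (Fintype.card ι),
        ∫ t : ℝ, t ^ i ∂(ENNReal.ofReal ((w ∘ e.symm) j) • Measure.dirac ((x ∘ e.symm) j))
          = (w ∘ e.symm) j * ((x ∘ e.symm) j) ^ i := by
      intro j
      rw [integral_smul_measure, integral_dirac,
        ENNReal.toReal_ofReal (show (0:ℝ) ≤ (w ∘ e.symm) j from hw0 _)]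
      simp
    rw [Finset.sum_congr rfl (fun j _ => hterm j)]
    -- relate to the coordinate of b
    set k : Fin p := ⟨i - 1, by omega⟩ with hkdef
    have hki : (k : ℕ) + 1 = i := by simp [hkdef]; omega
    have hcoord : ∑ j : ι, w j * (x j) ^ i = b k := by
      have hthis := congrArg (fun v => (EuclideanSpace.proj k (𝕜 := ℝ)) v) hsum
      simp only [map_sum, _root_.map_smul] at hthis
      have h3 : b k = (EuclideanSpace.proj k (𝕜 := ℝ)) b := by
        simp [PiLp.proj_apply]
      rw [h3, ← hthis]
      apply Finset.sum_congr rfl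
      intro j _
      have hzx : z j = g (x j) := (hx j).symm
      rw [hzx]
      have : (EuclideanSpace.proj k (𝕜 := ℝ)) (g (x j)) = (x j) ^ ((k : ℕ) + 1) := by
        simp [hgdef]
      rw [smul_eq_mul, this, hki]
    rw [show ∑ j : Fin (Fintype.card ι), (w ∘ e.symm) j * ((x ∘ e.symm) j) ^ i
        = ∑ j : ι, w j * (x j) ^ i from
      Fintype.sum_equiv e.symm _ _ (fun j => rfl)]
    rw [hcoord, hbk k, hki]
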